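/- Let n ≥ 1 and let f : ℂⁿ → ℂ be continuous on the closed unit polydisc { z ∈ ℂⁿ : |z_i| ≤ 1 for all i } and holomorphic on the open unit polydisc { z ∈ ℂⁿ : |z_i| < 1 for all i }. Let k ∈ {1, …, n} and let w ∈ ℂ with |w| = 1. Then the function of the remaining n − 1 variables, (z₁, …, z_{k−1}, z_{k+1}, …, zₙ) ↦ f(z₁, …, z_{k−1}, w, z_{k+1}, …, zₙ), is holomorphic on the open unit polydisc { z ∈ ℂ^{n−1} : |z_i| < 1 for all i }. -/

import Mathlib

open scoped Classical
open Metric Set Filter Topology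

/-- Cauchy estimate for the Fréchet derivative via 1D slices. -/
lemma cauchy_est {E : Type*} [NormedAddCommGroup E] [NormedSpace ℂ E]
    (h : E → ℂ) (c : E) {R C r : ℝ} (hr : 0 < r) (hrR : r < R)
    (hd : DifferentiableOn ℂ h (ball c R))
    (hC : ∀ z ∈ ball c R, ‖h z‖ ≤ C) :
    ‖fderiv ℂ h c‖ ≤ C / r := by
  have hR : 0 < R := hr.trans hrR
  have hcball : c ∈ ball c R := mem_ball_self hR
  have hda : DifferentiableAt ℂ h c :=
    (hd c hcball).differentiableAt (isOpen_ball.mem_nhds hcball)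
  have hC0 : 0 ≤ C := (norm_nonneg _).trans (hC c hcball)
  refine ContinuousLinearMap.opNorm_le_bound _ (by positivity) fun v => ?_
  rcases eq_or_ne v 0 with rfl | hv
  · simp
  have hv0 : 0 < ‖v‖ := norm_pos_iff.mpr hv
  set s : ℂ → ℂ := fun ζ => h (c + ζ • v) with hs
  have hmaps : ∀ ζ : ℂ, ‖ζ‖ < R / ‖v‖ → c + ζ • v ∈ ball c R := by
    intro ζ hζ
    rw [mem_ball, dist_self_add_left, norm_smul]
    calc ‖ζ‖ * ‖v‖ < (R / ‖v‖) * ‖v‖ := by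
          exact mul_lt_mul_of_pos_right hζ hv0
      _ = R := div_mul_cancel₀ _ hv0.ne'
  have hsd : DifferentiableOn ℂ s (ball (0 : ℂ) (R / ‖v‖)) := by
    intro ζ hζ
    refine DifferentiableWithinAt.comp (t := ball c R) ζ
      ((hd _ (hmaps ζ (by simpa [mem_ball, dist_zero_right] using hζ))).mono subset_rfl)
      ?_ ?_
    · exact (differentiableWithinAt_const c).add
        ((differentiableWithinAt_id.smul_const v))
    · intro u hu
      exact hmaps u (by simpa [mem_ball, dist_zero_right] using hu)
  have hderivs : HasDerivAt s (fderiv ℂ h c v) 0 := by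
    have h1 : HasDerivAt (fun ζ : ℂ => c + ζ • v) v 0 := by
      simpa using ((hasDerivAt_id (0:ℂ)).smul_const v).const_add c
    have h2 : HasFDerivAt h (fderiv ℂ h c) (c + (0:ℂ) • v) := by
      simpa using hda.hasFDerivAt
    have := h2.comp_hasDerivAt 0 h1
    exact this
  have key : ‖deriv s 0‖ ≤ C / (r / ‖v‖) := by
    refine Complex.norm_deriv_le_of_forall_mem_sphere_norm_le (by positivity) ?_ ?_
    · refine DifferentiableOn.diffContOnCl ?_
      refine hsd.mono ?_
      rw [closure_ball _ (by positivity : (0:ℝ) < r / ‖v‖).ne']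
      intro x hx
      rw [mem_closedBall, dist_zero_right] at hx
      rw [mem_ball, dist_zero_right]
      exact hx.trans_lt (by gcongr)
    · intro ζ hζ
      rw [mem_sphere_zero_iff_norm] at hζ
      refine hC _ (hmaps ζ ?_)
      rw [hζ]
      gcongr
  rw [hderivs.deriv] at key
  calc ‖fderiv ℂ h c v‖ ≤ C / (r / ‖v‖) := key
    _ = C / r * ‖v‖ := by field_simp

/-- A uniform limit of holomorphic functions on an open set is holomorphic. -/
lemma unif_limit_diff {E : Type*} [NormedAddCommGroup E] [NormedSpace ℂ E]
    {F : ℕ → E → ℂ} {g : E → ℂ} {s : Set E} (hs : IsOpen s)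
    (hF : ∀ n, DifferentiableOn ℂ (F n) s)
    (hg : TendstoUniformlyOn F g atTop s) :
    DifferentiableOn ℂ g s := by
  intro z₀ hz₀
  obtain ⟨R₂, hR₂, hball⟩ := Metric.isOpen_iff.mp hs z₀ hz₀
  set R := R₂ / 2 with hR
  have hR0 : 0 < R := by positivity
  have hsub : ball z₀ R ⊆ s := (ball_subset_ball (by linarith)).trans hball
  -- uniform Cauchy of F on s
  have hcau : UniformCauchySeqOn F atTop s := hg.uniformCauchySeqOn
  rw [Metric.uniformCauchySeqOn_iff] at hcau
  -- fderivs are uniformly Cauchy on ball z₀ R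
  have hF' : ∀ n, ∀ x ∈ ball z₀ R, HasFDerivAt (F n) (fderiv ℂ (F n) x) x := by
    intro n x hx
    exact ((hF n x (hsub hx)).differentiableAt (hs.mem_nhds (hsub hx))).hasFDerivAt
  have hcau' : UniformCauchySeqOn (fun n x => fderiv ℂ (F n) x) atTop (ball z₀ R) := by
    rw [Metric.uniformCauchySeqOn_iff]
    intro ε hε
    obtain ⟨N, hN⟩ := hcau (ε * R / 8) (by positivity)
    refine ⟨N, fun p hp q hq z hz => ?_⟩
    have hzball : ball z R ⊆ s := by
      refine subset_trans ?_ hball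
      intro y hy
      rw [mem_ball] at *
      calc dist y z₀ ≤ dist y z + dist z z₀ := dist_triangle _ _ _
        _ < R + R := add_lt_add hy hz
        _ = R₂ := by rw [hR]; ring
    have hdiff : DifferentiableOn ℂ (fun x => F p x - F q x) (ball z R) := by
      intro x hx
      exact (((hF p x (hzball hx)).sub (hF q x (hzball hx))).mono hzball)
    have hbd : ∀ x ∈ ball z R, ‖F p x - F q x‖ ≤ ε * R / 8 := by
      intro x hx
      have := hN p hp q hq x (hzball hx)
      rw [dist_eq_norm] at this
      exact this.le
    have hest := cauchy_est (fun x => F p x - F q x) z (C := ε * R / 8)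
      (r := R / 2) (by positivity) (by linarith) hdiff hbd
    have heq : fderiv ℂ (fun x => F p x - F q x) z
        = fderiv ℂ (F p) z - fderiv ℂ (F q) z := by
      have hp' : DifferentiableAt ℂ (F p) z :=
        (hF p z (hzball (mem_ball_self hR0))).differentiableAt
          (hs.mem_nhds (hzball (mem_ball_self hR0)))
      have hq' : DifferentiableAt ℂ (F q) z :=
        (hF q z (hzball (mem_ball_self hR0))).differentiableAt
          (hs.mem_nhds (hzball (mem_ball_self hR0)))
      exact fderiv_sub hp' hq'
    rw [dist_eq_norm, ← heq]
    calc ‖fderiv ℂ (fun x => F p x - F q x) z‖ ≤ (ε * R / 8) / (R / 2) := hest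
      _ = ε / 4 := by field_simp; ring
      _ < ε := by linarith
  -- pointwise limits of the fderivs exist
  have hptwise : ∀ x ∈ ball z₀ R, ∃ L, Tendsto (fun n => fderiv ℂ (F n) x) atTop (𝓝 L) := by
    intro x hx
    refine cauchySeq_tendsto_of_complete ?_
    rw [Metric.cauchySeq_iff]
    intro ε hε
    rw [Metric.uniformCauchySeqOn_iff] at hcau'
    obtain ⟨N, hN⟩ := hcau' ε hε
    exact ⟨N, fun p hp q hq => hN p hp q hq x hx⟩
  choose g' hg' using fun x : ball z₀ R => hptwise x x.2
  set G : E → (E →L[ℂ] ℂ) := fun x => if hx : x ∈ ball z₀ R then g' ⟨x, hx⟩ else 0 with hG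
  have hGt : ∀ x ∈ ball z₀ R, Tendsto (fun n => fderiv ℂ (F n) x) atTop (𝓝 (G x)) := by
    intro x hx
    have : G x = g' ⟨x, hx⟩ := dif_pos hx
    rw [this]
    exact hg' ⟨x, hx⟩
  have hunif : TendstoUniformlyOn (fun n x => fderiv ℂ (F n) x) G atTop (ball z₀ R) :=
    hcau'.tendstoUniformlyOn_of_tendsto hGt
  have hfg : ∀ x ∈ ball z₀ R, Tendsto (fun n => F n x) atTop (𝓝 (g x)) := by
    intro x hx
    exact hg.tendsto_at (hsub hx)
  have := hasFDerivAt_of_tendstoUniformlyOn isOpen_ball hunif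
    (fun n x hx => hF' n x hx) hfg (mem_ball_self hR0)
  exact (this.differentiableAt.differentiableWithinAt)

/-- Boundary slices of functions in `A(𝔻ⁿ)`:
if `f` is continuous on the closed unit polydisc in `ℂⁿ` (with `n = m + 1 ≥ 1`) and
holomorphic on the open unit polydisc, then for any coordinate `k` and any `w` with
`|w| = 1`, the function of the remaining variables obtained by fixing the `k`-th
coordinate equal to `w` is holomorphic on the open unit polydisc in `ℂ^{n−1}`. -/
theorem polydisc_boundary_slice (m : ℕ) (f : (Fin (m + 1) → ℂ) → ℂ)
    (hfc : ContinuousOn f {z : Fin (m + 1) → ℂ | ∀ i, ‖z i‖ ≤ 1})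
    (hfd : DifferentiableOn ℂ f {z : Fin (m + 1) → ℂ | ∀ i, ‖z i‖ < 1})
    (k : Fin (m + 1)) (w : ℂ) (hw : ‖w‖ = 1) :
    DifferentiableOn ℂ (fun z : Fin m → ℂ => f (Fin.insertNth k w z))
      {z : Fin m → ℂ | ∀ i, ‖z i‖ < 1} := by
  -- identify the polydiscs with balls in the sup norm
  have hsetlt : {z : Fin m → ℂ | ∀ i, ‖z i‖ < 1} = ball (0 : Fin m → ℂ) 1 := by
    ext z
    simp [mem_ball, dist_zero_right, pi_norm_lt_iff (zero_lt_one)]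
  have hsetlt' : {z : Fin (m+1) → ℂ | ∀ i, ‖z i‖ < 1}
      = ball (0 : Fin (m+1) → ℂ) 1 := by
    ext z
    simp [mem_ball, dist_zero_right, pi_norm_lt_iff (zero_lt_one)]
  have hsetle : {z : Fin (m+1) → ℂ | ∀ i, ‖z i‖ ≤ 1}
      = closedBall (0 : Fin (m+1) → ℂ) 1 := by
    ext z
    simp [mem_closedBall, dist_zero_right, pi_norm_le_iff_of_nonneg (zero_le_one)]
  rw [hsetlt]
  rw [hsetlt'] at hfd
  rw [hsetle] at hfc
  -- the approximating sequence
  set r : ℕ → ℝ := fun n => (n : ℝ) / (n + 1) with hrdef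
  have hr0 : ∀ n, 0 ≤ r n := fun n => by positivity
  have hr1 : ∀ n, r n < 1 := fun n => by
    rw [hrdef]
    rw [div_lt_one (by positivity)]
    linarith
  set c : ℕ → ℂ := fun n => (r n : ℂ) * w with hcdef
  have hcabs : ∀ n, ‖c n‖ < 1 := fun n => by
    show ‖((r n : ℝ) : ℂ) * w‖ < 1
    rw [norm_mul, hw, mul_one, Complex.norm_real, Real.norm_eq_abs, abs_of_nonneg (hr0 n)]
    exact hr1 n
  set F : ℕ → (Fin m → ℂ) → ℂ := fun n z => f (Fin.insertNth k (c n) z) with hFdef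
  -- insertNth is differentiable in z
  have hins_diff : ∀ (a : ℂ), Differentiable ℂ (fun z : Fin m → ℂ => (Fin.insertNth k a z : Fin (m+1) → ℂ)) := by
    intro a
    rw [differentiable_pi]
    intro j
    refine Fin.succAboveCases k ?_ ?_ j
    · simp only [Fin.insertNth_apply_same]
      exact differentiable_const a
    · intro i
      simp only [Fin.insertNth_apply_succAbove]
      exact differentiable_pi.mp differentiable_id i
  -- insertNth maps balls appropriately
  have hins_mem : ∀ (a : ℂ), ‖a‖ < 1 → ∀ z ∈ ball (0 : Fin m → ℂ) 1,
      Fin.insertNth k a z ∈ ball (0 : Fin (m+1) → ℂ) 1 := by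
    intro a ha z hz
    rw [mem_ball, dist_zero_right, pi_norm_lt_iff zero_lt_one]
    rw [mem_ball, dist_zero_right, pi_norm_lt_iff zero_lt_one] at hz
    intro j
    refine Fin.succAboveCases k ?_ ?_ j
    · rw [Fin.insertNth_apply_same]
      exact ha
    · intro i
      rw [Fin.insertNth_apply_succAbove]
      exact hz i
  have hins_mem_cl : ∀ (a : ℂ), ‖a‖ ≤ 1 → ∀ z : Fin m → ℂ,
      z ∈ closedBall (0 : Fin m → ℂ) 1 →
      Fin.insertNth k a z ∈ closedBall (0 : Fin (m+1) → ℂ) 1 := by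
    intro a ha z hz
    rw [mem_closedBall, dist_zero_right, pi_norm_le_iff_of_nonneg zero_le_one]
    rw [mem_closedBall, dist_zero_right] at hz
    intro j
    refine Fin.succAboveCases k ?_ ?_ j
    · rw [Fin.insertNth_apply_same]
      exact ha
    · intro i
      rw [Fin.insertNth_apply_succAbove]
      exact (norm_le_pi_norm z i).trans hz
  -- each F n is holomorphic on the ball
  have hFdiff : ∀ n, DifferentiableOn ℂ (F n) (ball (0 : Fin m → ℂ) 1) := by
    intro n
    refine DifferentiableOn.comp hfd ((hins_diff (c n)).differentiableOn) ?_
    exact fun z hz => hins_mem (c n) (hcabs n) z hz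
  -- uniform convergence
  have hcompact : IsCompact (closedBall (0 : Fin (m+1) → ℂ) 1) := isCompact_closedBall _ _
  have hUC : UniformContinuousOn f (closedBall (0 : Fin (m+1) → ℂ) 1) :=
    hcompact.uniformContinuousOn_of_continuous hfc
  have hunif : TendstoUniformlyOn F (fun z => f (Fin.insertNth k w z)) atTop
      (ball (0 : Fin m → ℂ) 1) := by
    rw [Metric.tendstoUniformlyOn_iff]
    intro ε hε
    rw [Metric.uniformContinuousOn_iff] at hUC
    obtain ⟨δ, hδ, hδ'⟩ := hUC ε hε
    obtain ⟨N, hN⟩ := exists_nat_gt (1 / δ)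
    rw [eventually_atTop]
    refine ⟨N, fun n hn z hz => ?_⟩
    have hzcl : z ∈ closedBall (0 : Fin m → ℂ) 1 := ball_subset_closedBall hz
    have h1 : Fin.insertNth k w z ∈ closedBall (0 : Fin (m+1) → ℂ) 1 :=
      hins_mem_cl w hw.le z hzcl
    have h2 : Fin.insertNth k (c n) z ∈ closedBall (0 : Fin (m+1) → ℂ) 1 :=
      hins_mem_cl (c n) (hcabs n).le z hzcl
    refine hδ' _ h1 _ h2 ?_
    -- distance between the two insertNth points
    have hdist : dist (Fin.insertNth k w z : Fin (m+1) → ℂ) (Fin.insertNth k (c n) z : Fin (m+1) → ℂ) ≤ 1 - r n := by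
      rw [dist_eq_norm]
      rw [pi_norm_le_iff_of_nonneg (by linarith [hr1 n] : (0:ℝ) ≤ 1 - r n)]
      intro j
      refine Fin.succAboveCases k ?_ ?_ j
      · simp only [Pi.sub_apply, Fin.insertNth_apply_same]
        have hwc : w - c n = ((1 - r n : ℝ) : ℂ) * w := by
          rw [hcdef]; push_cast; ring
        rw [hwc, norm_mul, Complex.norm_real, hw, mul_one, Real.norm_eq_abs,
          abs_of_nonneg (by linarith [hr1 n])]
      · intro i
        simp only [Pi.sub_apply, Fin.insertNth_apply_succAbove]
        simp
        linarith [hr1 n]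
    have hlt : 1 - r n < δ := by
      have hn1 : (1:ℝ) / δ < n + 1 := by
        calc (1:ℝ)/δ < N := hN
          _ ≤ n := by exact_mod_cast hn
          _ < n + 1 := by linarith
      have : 1 - r n = 1 / (n + 1) := by
        rw [hrdef]
        field_simp
        ring
      rw [this]
      rw [div_lt_iff₀ (by positivity)]
      rw [div_lt_iff₀ hδ] at hn1
      nlinarith
    exact lt_of_le_of_lt hdist hlt
  exact unif_limit_diff isOpen_ball hFdiff hunif
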